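/- Let f be a holomorphic generator on 𝔻 of hyperbolic type with Denjoy–Wolff point a = 1, i.e. f(z) = −(1 − z)²·p(z) with p holomorphic, Re p ≥ 0 on 𝔻, and the angular derivative f'(1) = ∠lim_{z→1} f(z)/(z − 1) a positive real number (then f(0) ≠ 0). Let ζ_1, …, ζ_N be pairwise distinct boundary regular null points of f in ∂𝔻 \ {1} with f'(ζ_n) = ∠lim_{z→ζ_n} f(z)/(z − ζ_n) < 0 real. Then both inequalities hold: Σ_{n=1}^{N} 1/|f'(ζ_n)| ≤ 1/f'(1) and Σ_{n=1}^{N} (1 − Re ζ_n)/|f'(ζ_n)| ≤ −Re(1/f(0)); and equality holds in either of the two inequalities if and only if 1/f(z) = Σ_{n=1}^{N} (1/|f'(ζ_n)|)·(1/(z − 1) − 1/(z − ζ_n)) for all z ∈ 𝔻. -/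

import Mathlib

open Complex Filter Metric Finset Set

set_option maxHeartbeats 1600000

noncomputable section

/-- The Stolz angle at a boundary point `ζ` with opening parameter `M`. -/
def StolzAngle (ζ : ℂ) (M : ℝ) : Set ℂ :=
  {z : ℂ | ‖z‖ < 1 ∧ ‖ζ - z‖ < M * (1 - ‖z‖)}

/-- Angular (nontangential) limit of `h` at `ζ` equals `L`: within every Stolz
angle `S(ζ, M)`, `M > 1`, the function tends to `L`. -/
def AngularLimit (h : ℂ → ℂ) (ζ : ℂ) (L : ℂ) : Prop :=
  ∀ M : ℝ, 1 < M → Tendsto h (nhdsWithin ζ (StolzAngle ζ M)) (nhds L)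

/-- Angular limit of `h` at `ζ` is `∞`: `|h|` tends to `+∞` within every Stolz angle. -/
def AngularLimitInfty (h : ℂ → ℂ) (ζ : ℂ) : Prop :=
  ∀ M : ℝ, 1 < M → Tendsto (fun z => ‖h z‖) (nhdsWithin ζ (StolzAngle ζ M)) atTop

namespace Stmt19Aux

local notation "D" => ball (0:ℂ) 1

lemma normSq_identity (w z : ℂ) :
    normSq (1 - (starRingEnd ℂ) w * z) - normSq (w - z) = (1 - normSq w) * (1 - normSq z) := by
  simp only [normSq_apply, mul_re, mul_im, sub_re, sub_im, one_re, one_im,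
    Complex.conj_re, Complex.conj_im]
  ring

lemma normSq_add_conj_sub (a b : ℂ) :
    normSq (a + (starRingEnd ℂ) b) - normSq (a - b) = 4 * a.re * b.re := by
  simp only [normSq_apply, add_re, add_im, sub_re, sub_im, Complex.conj_re, Complex.conj_im]
  ring

lemma re_identity (a t : ℂ) :
    ((a + (starRingEnd ℂ) a * t) * (starRingEnd ℂ) (1 - t)).re = a.re * (1 - normSq t) := by
  simp only [normSq_apply, mul_re, mul_im, sub_re, sub_im, add_re, add_im, one_re, one_im,
    Complex.conj_re, Complex.conj_im]
  ring

lemma mem_D_iff {z : ℂ} : z ∈ D ↔ ‖z‖ < 1 := mem_ball_zero_iff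

lemma normSq_lt_one_of_mem {z : ℂ} (hz : z ∈ D) : normSq z < 1 := by
  have h := mem_D_iff.1 hz
  have := Complex.sq_norm z
  nlinarith [norm_nonneg z]

lemma mem_D_of_normSq {z : ℂ} (hz : normSq z < 1) : z ∈ D := by
  rw [mem_D_iff]
  nlinarith [Complex.sq_norm z, norm_nonneg z]

lemma one_sub_conj_mul_ne {w z : ℂ} (hw : w ∈ D) (hz : z ∈ D) :
    1 - (starRingEnd ℂ) w * z ≠ 0 := by
  intro h
  have h1 : normSq (1 - (starRingEnd ℂ) w * z) = 0 := by rw [h]; simp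
  have h2 := normSq_identity w z
  have h3 := normSq_lt_one_of_mem hw
  have h4 := normSq_lt_one_of_mem hz
  nlinarith [normSq_nonneg (w - z)]

/-- The Möbius automorphism -/
def moeb (w η : ℂ) : ℂ := (w - η) / (1 - (starRingEnd ℂ) w * η)

lemma moeb_mem {w η : ℂ} (hw : w ∈ D) (hη : η ∈ D) : moeb w η ∈ D := by
  apply mem_D_of_normSq
  have hne := one_sub_conj_mul_ne hw hη
  rw [moeb, normSq_div]
  rw [div_lt_one (normSq_pos.mpr hne)]
  have h2 := normSq_identity w η
  have h3 := normSq_lt_one_of_mem hw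
  have h4 := normSq_lt_one_of_mem hη
  nlinarith

lemma moeb_diff (w : ℂ) (hw : w ∈ D) : DifferentiableOn ℂ (moeb w) D := by
  apply DifferentiableOn.div
  · exact (differentiableOn_const _).sub differentiableOn_id
  · exact (differentiableOn_const _).sub ((differentiableOn_const _).mul differentiableOn_id)
  · exact fun z hz => one_sub_conj_mul_ne hw hz

lemma moeb_invol {w z : ℂ} (hw : w ∈ D) (hz : z ∈ D) : moeb w (moeb w z) = z := by
  have h1 := one_sub_conj_mul_ne hw hz
  have hww : (1:ℂ) - (starRingEnd ℂ) w * w ≠ 0 := by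
    have h3 := normSq_lt_one_of_mem hw
    rw [mul_comm, Complex.mul_conj]
    intro h
    have h4 : (normSq w : ℂ) = 1 := by linear_combination -h
    have : normSq w = 1 := by exact_mod_cast h4
    linarith
  have hden : 1 - (starRingEnd ℂ) w * moeb w z
      = (1 - (starRingEnd ℂ) w * w) / (1 - (starRingEnd ℂ) w * z) := by
    rw [moeb]; field_simp; ring
  have hnum : w - moeb w z = (z * (1 - (starRingEnd ℂ) w * w)) / (1 - (starRingEnd ℂ) w * z) := by
    rw [moeb, eq_div_iff h1, sub_mul, div_mul_cancel₀ _ h1]; ring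
  have : moeb w (moeb w z) = (w - moeb w z) / (1 - (starRingEnd ℂ) w * moeb w z) := rfl
  rw [this, hnum, hden]
  rw [div_div_div_cancel_right₀ h1, mul_div_assoc, div_self hww, mul_one]

/-- Schwarz–Pick -/
lemma schwarz_pick {F : ℂ → ℂ} (hd : DifferentiableOn ℂ F D)
    (hmaps : ∀ z ∈ D, F z ∈ D) {w : ℂ} (hw : w ∈ D) (hFw : F w = 0)
    {z : ℂ} (hz : z ∈ D) :
    ‖F z‖ * ‖1 - (starRingEnd ℂ) w * z‖ ≤ ‖w - z‖ := by
  have hdm : DifferentiableOn ℂ (fun η => F (moeb w η)) D :=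
    hd.comp (moeb_diff w hw) (fun η hη => moeb_mem hw hη)
  have hm : Set.MapsTo (fun η => F (moeb w η)) D D := fun η hη => hmaps _ (moeb_mem hw hη)
  have h0 : (fun η => F (moeb w η)) 0 = 0 := by
    simp only [moeb]
    simp [hFw]
  have key := Complex.norm_le_norm_of_mapsTo_ball hdm (hm.mono_right ball_subset_closedBall) h0
    (z := moeb w z) (mem_D_iff.1 (moeb_mem hw hz))
  rw [moeb_invol hw hz] at key
  have hne := one_sub_conj_mul_ne hw hz
  have : ‖moeb w z‖ = ‖w - z‖ / ‖1 - (starRingEnd ℂ) w * z‖ := by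
    rw [moeb, norm_div]
  rw [this] at key
  rw [← le_div_iff₀ (norm_pos_iff.2 hne)]
  exact key

/-- Q with nonneg re and vanishing re somewhere is constant. -/
lemma const_of_re_zero {Q : ℂ → ℂ} (hd : DifferentiableOn ℂ Q D)
    (hre : ∀ z ∈ D, 0 ≤ (Q z).re) {w₀ : ℂ} (hw₀ : w₀ ∈ D) (h0 : (Q w₀).re = 0) :
    ∀ z ∈ D, Q z = Q w₀ := by
  set E : ℂ → ℂ := fun z => Complex.exp (-Q z) with hE
  have hEd : DifferentiableOn ℂ E D := (hd.neg).cexp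
  have hmax : IsMaxOn (norm ∘ E) D w₀ := by
    intro z hz
    simp only [Set.mem_setOf_eq, Function.comp_apply, hE, Complex.norm_exp, neg_re, h0]
    exact Real.exp_le_exp.2 (by simpa using hre z hz)
  have heq := Complex.eqOn_of_isPreconnected_of_isMaxOn_norm
    (convex_ball (0:ℂ) 1).isPreconnected isOpen_ball hEd hw₀ hmax
  have hderiv : ∀ z ∈ D, deriv Q z = 0 := by
    intro z hz
    have hQz : DifferentiableAt ℂ Q z := hd.differentiableAt (isOpen_ball.mem_nhds hz)
    have hEz : HasDerivAt E (Complex.exp (-Q z) * -deriv Q z) z :=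
      (hQz.hasDerivAt.neg).cexp
    have hEc : E =ᶠ[nhds z] (fun _ => E w₀) := by
      filter_upwards [isOpen_ball.mem_nhds hz] with x hx
      exact heq hx
    have hEz' : deriv E z = 0 := by
      rw [Filter.EventuallyEq.deriv_eq hEc, deriv_const]
    rw [hEz.deriv] at hEz'
    have hexp := Complex.exp_ne_zero (-Q z)
    field_simp at hEz'
    rcases mul_eq_zero.1 (neg_eq_zero.1 hEz') with h | h
    · exact absurd h hexp
    · exact h
  intro z hz
  refine (convex_ball (0:ℂ) 1).is_const_of_fderivWithin_eq_zero hd ?_ hz hw₀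
  intro x hx
  rw [fderivWithin_of_isOpen isOpen_ball hx]
  have hQx : DifferentiableAt ℂ Q x := hd.differentiableAt (isOpen_ball.mem_nhds hx)
  ext
  have hfd : fderiv ℂ Q x = ContinuousLinearMap.smulRight (1 : ℂ →L[ℂ] ℂ) (deriv Q x) :=
    hQx.hasDerivAt.hasFDerivAt.fderiv
  rw [hfd, hderiv x hx]
  simp

lemma harnack {Q : ℂ → ℂ} (hd : DifferentiableOn ℂ Q D) (hre : ∀ z ∈ D, 0 ≤ (Q z).re)
    {z w : ℂ} (hz : z ∈ D) (hw : w ∈ D) :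
    (Q z).re * ((1 - normSq z) * (1 - normSq w))
      ≤ (Q w).re * (4 * normSq (1 - (starRingEnd ℂ) w * z)) := by
  by_cases hcase : ∃ w₀ ∈ D, (Q w₀).re = 0
  · obtain ⟨w₀, hw₀, h0⟩ := hcase
    have hc := const_of_re_zero hd hre hw₀ h0
    have h1 : (Q z).re = 0 := by rw [hc z hz]; exact h0
    have h2 : (Q w).re = 0 := by rw [hc w hw]; exact h0
    rw [h1, h2]; simp
  · push_neg at hcase
    have hpos : ∀ x ∈ D, 0 < (Q x).re :=
      fun x hx => lt_of_le_of_ne (hre x hx) (Ne.symm (hcase x hx))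
    set ω : ℂ → ℂ := fun η => (Q η - Q w) / (Q η + (starRingEnd ℂ) (Q w)) with hωdef
    have hkey : ∀ η : ℂ, normSq (Q η + (starRingEnd ℂ) (Q w)) - normSq (Q η - Q w)
        = 4 * (Q η).re * (Q w).re := fun η => normSq_add_conj_sub _ _
    have hdenom : ∀ η ∈ D, Q η + (starRingEnd ℂ) (Q w) ≠ 0 := by
      intro η hη h
      have hk := hkey η
      rw [h] at hk; simp only [map_zero] at hk
      nlinarith [normSq_nonneg (Q η - Q w), hpos η hη, hpos w hw]
    have hωd : DifferentiableOn ℂ ω D := ((hd.sub (differentiableOn_const _)).div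
        (hd.add (differentiableOn_const _)) hdenom)
    have hωmem : ∀ η ∈ D, ω η ∈ D := by
      intro η hη
      apply mem_D_of_normSq
      rw [hωdef]; simp only
      rw [normSq_div, div_lt_one (normSq_pos.mpr (hdenom η hη))]
      nlinarith [hkey η, hpos η hη, hpos w hw]
    have hωw : ω w = 0 := by rw [hωdef]; simp
    have hSP := schwarz_pick hωd hωmem hw hωw hz
    have hid : Q z * (1 - ω z) = Q w + (starRingEnd ℂ) (Q w) * ω z := by
      rw [hωdef]; simp only
      field_simp [hdenom z hz]
      ring
    have hre_id : (Q z).re * normSq (1 - ω z) = (Q w).re * (1 - normSq (ω z)) := by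
      have h2 : (Q z * (1 - ω z)) * (starRingEnd ℂ) (1 - ω z)
          = (Q w + (starRingEnd ℂ) (Q w) * ω z) * (starRingEnd ℂ) (1 - ω z) := by rw [hid]
      rw [mul_assoc, Complex.mul_conj] at h2
      have h3 := congrArg Complex.re h2
      rw [re_identity] at h3
      rw [mul_comm (Q z), Complex.re_ofReal_mul] at h3
      linarith [h3]
    set s := ‖ω z‖ with hs
    set A := ‖w - z‖ with hA
    set B := ‖1 - (starRingEnd ℂ) w * z‖ with hB
    set u := (Q z).re
    set v := (Q w).re
    have hs0 : 0 ≤ s := norm_nonneg _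
    have hs1 : s < 1 := by
      have := normSq_lt_one_of_mem (hωmem z hz)
      rw [← Complex.sq_norm] at this
      nlinarith
    have hsB : s * B ≤ A := hSP
    have hA0 : 0 ≤ A := norm_nonneg _
    have hB0 : 0 ≤ B := norm_nonneg _
    have hP : 0 < (1 - normSq z) * (1 - normSq w) := by
      have := normSq_lt_one_of_mem hz; have := normSq_lt_one_of_mem hw
      nlinarith
    have hAB : A^2 + (1 - normSq w) * (1 - normSq z) = B^2 := by
      rw [hA, hB, Complex.sq_norm, Complex.sq_norm]
      linarith [normSq_identity w z]
    have hBpos : 0 < B := by nlinarith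
    have hALB : A ≤ B := by nlinarith
    have h1ω : (1 - s)^2 ≤ normSq (1 - ω z) := by
      have htri : 1 - s ≤ ‖1 - ω z‖ := by
        have h := norm_add_le (1 - ω z) (ω z)
        simp only [sub_add_cancel] at h
        simp only [norm_one] at h
        linarith
      rw [← Complex.sq_norm]
      nlinarith [norm_nonneg (1 - ω z)]
    have hu : 0 ≤ u := hre z hz
    have hv : 0 ≤ v := hre w hw
    have hmain : u * (1-s)^2 ≤ v * (1 - s^2) := by
      have : v * (1 - normSq (ω z)) = v * (1 - s^2) := by
        rw [hs, Complex.sq_norm]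
      nlinarith [hre_id, mul_le_mul_of_nonneg_left h1ω hu]
    have step1 : u * (1-s) ≤ v * (1+s) := by
      have hpos1 : (0:ℝ) < 1 - s := by linarith
      apply le_of_mul_le_mul_right _ hpos1
      nlinarith [hmain]
    have step2 : u * (1-s) ≤ 2 * v := by nlinarith
    have step3 : u * (B - A) ≤ 2 * v * B := by
      have h1 : u * (B - A) ≤ u * (B - s * B) :=
        mul_le_mul_of_nonneg_left (by linarith) hu
      have h3 : (u * (1 - s)) * B ≤ (2 * v) * B :=
        mul_le_mul_of_nonneg_right step2 hB0
      nlinarith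
    have step4 : u * (B^2 - A^2) ≤ 4 * v * B^2 := by
      have h1 : u * (B^2 - A^2) = (u * (B - A)) * (B + A) := by ring
      have h2 : (u * (B - A)) * (B + A) ≤ (2 * v * B) * (B + A) :=
        mul_le_mul_of_nonneg_right step3 (by linarith)
      have h3 : (2 * v * B) * (B + A) ≤ (2 * v * B) * (2 * B) :=
        mul_le_mul_of_nonneg_left (by linarith) (by positivity)
      nlinarith
    have e1 : (1 - normSq z) * (1 - normSq w) = B^2 - A^2 := by linarith
    have e2 : normSq (1 - (starRingEnd ℂ) w * z) = B^2 := by rw [hB, Complex.sq_norm]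
    rw [e1, e2]
    linarith

lemma stolz_subset_D (ζ : ℂ) (M : ℝ) : StolzAngle ζ M ⊆ D := by
  intro z hz
  exact mem_ball_zero_iff.2 hz.1

lemma radial_mem_D {r : ℝ} (h0 : 0 ≤ r) (h1 : r < 1) {ζ : ℂ} (hζ : ‖ζ‖ = 1) :
    (r : ℂ) * ζ ∈ D := by
  rw [mem_ball_zero_iff]
  simp only [norm_mul, Complex.norm_real, Real.norm_eq_abs, hζ, mul_one]
  rwa [_root_.abs_of_nonneg h0]

lemma radial_tendsto {ζ : ℂ} (hζ : ‖ζ‖ = 1) :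
    Tendsto (fun r : ℝ => (r : ℂ) * ζ) (nhdsWithin 1 (Iio (1:ℝ)))
      (nhdsWithin ζ (StolzAngle ζ 2)) := by
  rw [tendsto_nhdsWithin_iff]
  constructor
  · have hc : Continuous (fun r : ℝ => (r : ℂ) * ζ) := continuous_ofReal.mul continuous_const
    have := hc.tendsto 1
    simp only [Complex.ofReal_one, one_mul] at this
    exact this.mono_left nhdsWithin_le_nhds
  · filter_upwards [Ioo_mem_nhdsLT_of_mem (show (1:ℝ) ∈ Ioc (0:ℝ) 1 by constructor <;> norm_num)]
      with r hr
    constructor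
    · simp only [norm_mul, Complex.norm_real, Real.norm_eq_abs, hζ, mul_one]
      rw [_root_.abs_of_nonneg hr.1.le]; exact hr.2
    · have h1 : ζ - (r:ℂ) * ζ = ((1 - r : ℝ) : ℂ) * ζ := by push_cast; ring
      rw [h1]
      simp only [norm_mul, Complex.norm_real, Real.norm_eq_abs, hζ, mul_one]
      rw [_root_.abs_of_nonneg (by linarith [hr.2] : (0:ℝ) ≤ 1 - r)]
      rw [_root_.abs_of_nonneg hr.1.le]
      linarith [hr.2]

lemma stolz_neBot {ζ : ℂ} (hζ : ‖ζ‖ = 1) :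
    (nhdsWithin ζ (StolzAngle ζ 2)).NeBot :=
  (radial_tendsto hζ).neBot

/-- Julia-type lemma. -/
lemma lemP {Q : ℂ → ℂ} (hd : DifferentiableOn ℂ Q D) (hre : ∀ z ∈ D, 0 ≤ (Q z).re)
    {ζ : ℂ} (hζ : ‖ζ‖ = 1) {w : ℂ}
    (hlim : Tendsto (fun r : ℝ => (1 - (r:ℂ)) * Q ((r:ℂ) * ζ)) (nhdsWithin 1 (Iio (1:ℝ)))
      (nhds w))
    {z : ℂ} (hz : z ∈ D) :
    w.re * (1 - normSq z) ≤ (Q z).re * (2 * normSq (ζ - z)) := by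
  have hIoo : Ioo (0:ℝ) 1 ∈ nhdsWithin (1:ℝ) (Iio (1:ℝ)) :=
    Ioo_mem_nhdsLT_of_mem (show (1:ℝ) ∈ Ioc (0:ℝ) 1 by constructor <;> norm_num)
  have hpt : ∀ r ∈ Ioo (0:ℝ) 1,
      ((1 - (r:ℂ)) * Q ((r:ℂ) * ζ)).re * ((1 + r) * (1 - normSq z))
        ≤ (Q z).re * (4 * normSq (1 - (starRingEnd ℂ) z * ((r:ℂ) * ζ))) := by
    intro r hr
    have hrD : (r:ℂ) * ζ ∈ D := radial_mem_D hr.1.le hr.2 hζ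
    have hH := harnack hd hre hrD hz
    have h1 : normSq ((r:ℂ) * ζ) = r^2 := by
      rw [normSq_mul]
      have : normSq ζ = 1 := by rw [← Complex.sq_norm, hζ]; norm_num
      rw [this, Complex.normSq_ofReal]; ring
    have h2 : ((1 - (r:ℂ)) * Q ((r:ℂ) * ζ)).re = (1 - r) * (Q ((r:ℂ) * ζ)).re := by
      have : (1 - (r:ℂ)) = ((1 - r : ℝ) : ℂ) := by push_cast; ring
      rw [this, Complex.re_ofReal_mul]
    rw [h2]
    have h3 : (1 - r) * (Q ((r:ℂ)*ζ)).re * ((1 + r) * (1 - normSq z))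
        = (Q ((r:ℂ)*ζ)).re * ((1 - normSq ((r:ℂ)*ζ)) * (1 - normSq z)) := by rw [h1]; ring
    rw [h3]
    exact hH
  have hlhs : Tendsto (fun r : ℝ => ((1 - (r:ℂ)) * Q ((r:ℂ) * ζ)).re * ((1 + r) * (1 - normSq z)))
      (nhdsWithin 1 (Iio (1:ℝ))) (nhds (w.re * (2 * (1 - normSq z)))) := by
    have h1 : Tendsto (fun r : ℝ => ((1 - (r:ℂ)) * Q ((r:ℂ) * ζ)).re)
        (nhdsWithin 1 (Iio (1:ℝ))) (nhds w.re) := (Complex.continuous_re.tendsto w).comp hlim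
    have h2 : Tendsto (fun r : ℝ => (1 + r) * (1 - normSq z))
        (nhdsWithin 1 (Iio (1:ℝ))) (nhds (2 * (1 - normSq z))) := by
      have hco : Continuous (fun r : ℝ => (1 + r) * (1 - normSq z)) := by continuity
      have := hco.tendsto 1
      norm_num at this
      exact this.mono_left nhdsWithin_le_nhds
    exact h1.mul h2
  have hrhs : Tendsto (fun r : ℝ => (Q z).re * (4 * normSq (1 - (starRingEnd ℂ) z * ((r:ℂ) * ζ))))
      (nhdsWithin 1 (Iio (1:ℝ))) (nhds ((Q z).re * (4 * normSq (1 - (starRingEnd ℂ) z * ζ)))) := by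
    have hco : Continuous (fun r : ℝ => (Q z).re * (4 * normSq (1 - (starRingEnd ℂ) z * ((r:ℂ) * ζ)))) := by
      continuity
    have := hco.tendsto 1
    norm_num at this ⊢
    exact (this.mono_left nhdsWithin_le_nhds)
  have hle := le_of_tendsto_of_tendsto hlhs hrhs
    (by filter_upwards [hIoo] with r hr using hpt r hr)
  have hns : normSq (1 - (starRingEnd ℂ) z * ζ) = normSq (ζ - z) := by
    have h1 : (starRingEnd ℂ) ζ * (ζ - z) = 1 - (starRingEnd ℂ) ζ * z := by
      rw [mul_sub]
      congr 1
      rw [mul_comm, Complex.mul_conj]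
      norm_cast
      rw [← Complex.sq_norm, hζ]; norm_num
    have h2 : normSq ((starRingEnd ℂ) ζ) = 1 := by
      rw [normSq_conj, ← Complex.sq_norm, hζ]; norm_num
    have h3 : normSq (1 - (starRingEnd ℂ) z * ζ) = normSq (1 - (starRingEnd ℂ) ζ * z) := by
      rw [← normSq_conj]
      congr 1
      simp [map_sub, map_mul]
      rw [mul_comm]
    calc normSq (1 - (starRingEnd ℂ) z * ζ) = normSq (1 - (starRingEnd ℂ) ζ * z) := h3
      _ = normSq ((starRingEnd ℂ) ζ * (ζ - z)) := by rw [h1]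
      _ = normSq ((starRingEnd ℂ) ζ) * normSq (ζ - z) := normSq_mul _ _
      _ = normSq (ζ - z) := by rw [h2, one_mul]
  rw [hns] at hle
  linarith

/-- real part identity for the elementary factor -/
lemma re_h_identity {ζ' z : ℂ} (hns : normSq ζ' = 1) (hzζ : z - ζ' ≠ 0) :
    ((1 - z) * (1 - ζ') / (z - ζ')).re * normSq (z - ζ')
      = (1 - ζ'.re) * (1 - normSq z) := by
  have h1 : (1 - z) * (1 - ζ') / (z - ζ') * ((normSq (z - ζ') : ℝ) : ℂ)
      = (1 - z) * (1 - ζ') * (starRingEnd ℂ) (z - ζ') := by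
    rw [← Complex.mul_conj]
    field_simp
  have h2 := congrArg Complex.re h1
  rw [mul_comm ((1 - z) * (1 - ζ') / (z - ζ')), Complex.re_ofReal_mul] at h2
  have h2' : ((1 - z) * (1 - ζ') / (z - ζ')).re * normSq (z - ζ')
      = ((1 - z) * (1 - ζ') * (starRingEnd ℂ) (z - ζ')).re := by linarith [h2]
  rw [h2']
  have hns' : ζ'.re^2 + ζ'.im^2 = 1 := by
    have := hns; rw [normSq_apply] at this; nlinarith
  simp only [normSq_apply, mul_re, mul_im, sub_re, sub_im, one_re, one_im,
    Complex.conj_re, Complex.conj_im]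
  linear_combination (1 - z.re) * hns'

end Stmt19Aux
open Stmt19Aux in
/-- unified hyperbolic form: both inequalities hold and equality
in either one characterizes the same extremal generator. -/
theorem stmt19 (N : ℕ) (p f : ℂ → ℂ)
    (hp : DifferentiableOn ℂ p (ball (0:ℂ) 1))
    (hre : ∀ z ∈ ball (0:ℂ) 1, 0 ≤ (p z).re)
    (hf : ∀ z, f z = -(1 - z)^2 * p z)
    (m₀ : ℝ) (hm₀ : 0 < m₀)
    (hder1 : AngularLimit (fun z => f z / (z - 1)) 1 (m₀ : ℂ))
    (ζ : Fin N → ℂ) (hinj : Function.Injective ζ)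
    (hζ : ∀ n, ‖ζ n‖ = 1) (hζ1 : ∀ n, ζ n ≠ 1)
    (m : Fin N → ℝ) (hm : ∀ n, m n < 0)
    (hder : ∀ n, AngularLimit (fun z => f z / (z - ζ n)) (ζ n) ((m n : ℝ) : ℂ)) :
    (∑ n, 1 / |m n|) ≤ 1 / m₀ ∧
    (∑ n, (1 - (ζ n).re) / |m n|) ≤ -(1 / f 0).re ∧
    (((∑ n, 1 / |m n|) = 1 / m₀ ↔
        ∀ z ∈ ball (0:ℂ) 1,
          1 / f z = ∑ n, (1 / ((|m n| : ℝ) : ℂ)) * (1 / (z - 1) - 1 / (z - ζ n))) ∧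
      ((∑ n, (1 - (ζ n).re) / |m n|) = -(1 / f 0).re ↔
        ∀ z ∈ ball (0:ℂ) 1,
          1 / f z = ∑ n, (1 / ((|m n| : ℝ) : ℂ)) * (1 / (z - 1) - 1 / (z - ζ n)))) := by
  classical
  set c : Fin N → ℝ := fun n => 1 / |m n| with hcdef
  have hcn : ∀ n, c n = 1 / |m n| := fun n => rfl
  have hmne : ∀ n, (m n : ℂ) ≠ 0 := fun n => by exact_mod_cast (hm n).ne
  have hcpos : ∀ n, 0 < c n := fun n => by
    rw [hcn n]; exact div_pos one_pos (abs_pos.2 (hm n).ne)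
  have hcm : ∀ n, c n = -(m n)⁻¹ := fun n => by
    rw [hcn n, abs_of_neg (hm n), one_div, inv_neg]
  have hζns : ∀ n, normSq (ζ n) = 1 := fun n => by
    rw [← Complex.sq_norm, hζ n]; norm_num
  have hζcc : ∀ n, (starRingEnd ℂ) (ζ n) * ζ n = 1 := fun n => by
    rw [mul_comm, Complex.mul_conj, hζns n]; norm_num
  have h1D : ∀ z ∈ ball (0:ℂ) 1, z ≠ (1:ℂ) := by
    intro z hz h
    rw [mem_ball_zero_iff, h] at hz
    simp at hz
  have hone_sub : ∀ z ∈ ball (0:ℂ) 1, (1:ℂ) - z ≠ 0 :=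
    fun z hz => sub_ne_zero.2 (Ne.symm (h1D z hz))
  have hzζ : ∀ (n) (z), z ∈ ball (0:ℂ) 1 → z - ζ n ≠ 0 := by
    intro n z hz h
    have h2 : z = ζ n := sub_eq_zero.1 h
    rw [mem_ball_zero_iff, h2] at hz
    rw [hζ n] at hz
    exact lt_irrefl _ hz
  have habs1 : ‖(1:ℂ)‖ = 1 := by simp
  have h0D : (0:ℂ) ∈ ball (0:ℂ) 1 := mem_ball_self one_pos
  -- p has no zeros on the disk
  have hpne : ∀ z ∈ ball (0:ℂ) 1, p z ≠ 0 := by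
    intro z₀ hz₀ hp0
    have hconst := const_of_re_zero hp hre hz₀ (by rw [hp0]; simp)
    have h2 := hder1 2 one_lt_two
    have hzero : Tendsto (fun z : ℂ => f z / (z - 1)) (nhdsWithin 1 (StolzAngle 1 2)) (nhds 0) := by
      apply Tendsto.congr' _ tendsto_const_nhds
      filter_upwards [self_mem_nhdsWithin] with z hzS
      simp [hf z, hconst z (stolz_subset_D _ _ hzS), hp0]
    haveI := stolz_neBot habs1
    have h3 : (m₀ : ℂ) = 0 := tendsto_nhds_unique h2 hzero
    exact hm₀.ne' (by exact_mod_cast h3)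
  set g : ℂ → ℂ := fun z => 1 / p z with hgdef
  have hgd : DifferentiableOn ℂ g (ball (0:ℂ) 1) := (differentiableOn_const 1).div hp hpne
  have hgre : ∀ z ∈ ball (0:ℂ) 1, 0 ≤ (g z).re := by
    intro z hz
    show 0 ≤ ((1:ℂ) / p z).re
    rw [one_div, Complex.inv_re]
    exact div_nonneg (hre z hz) (normSq_nonneg _)
  have hfne : ∀ z ∈ ball (0:ℂ) 1, f z ≠ 0 := by
    intro z hz
    rw [hf z]
    exact mul_ne_zero (neg_ne_zero.2 (pow_ne_zero 2 (hone_sub z hz))) (hpne z hz)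
  have hgf : ∀ z ∈ ball (0:ℂ) 1, g z = -(1 - z)^2 / f z := by
    intro z hz
    show (1:ℂ) / p z = -(1 - z)^2 / f z
    rw [hf z]
    rw [div_eq_div_iff (hpne z hz) (mul_ne_zero (neg_ne_zero.2 (pow_ne_zero 2 (hone_sub z hz))) (hpne z hz))]
    ring
  set hh : Fin N → ℂ → ℂ := fun n z => (1 - z) * (1 - ζ n) / (z - ζ n) with hhdef
  have hhn : ∀ n z, hh n z = (1 - z) * (1 - ζ n) / (z - ζ n) := fun n z => rfl
  have hhd : ∀ n, DifferentiableOn ℂ (hh n) (ball (0:ℂ) 1) := by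
    intro n
    apply DifferentiableOn.div
    · exact ((differentiableOn_const _).sub differentiableOn_id).mul (differentiableOn_const _)
    · exact differentiableOn_id.sub (differentiableOn_const _)
    · exact fun z hz => hzζ n z hz
  have hhre : ∀ (n) (z), z ∈ ball (0:ℂ) 1 →
      (hh n z).re * normSq (z - ζ n) = (1 - (ζ n).re) * (1 - normSq z) :=
    fun n z hz => re_h_identity (hζns n) (hzζ n z hz)
  -- radial limit of (1-r)·g(rζ) at each ζ n
  have hradg : ∀ n, Tendsto (fun r : ℝ => (1 - (r:ℂ)) * g ((r:ℂ) * ζ n))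
      (nhdsWithin 1 (Iio (1:ℝ))) (nhds ((2 * (1 - (ζ n).re) * c n : ℝ) : ℂ)) := by
    intro n
    have hinv : Tendsto (fun z => (z - ζ n) / f z) (nhdsWithin (ζ n) (StolzAngle (ζ n) 2))
        (nhds ((m n : ℂ)⁻¹)) := by
      have h := (hder n 2 one_lt_two).inv₀ (hmne n)
      apply h.congr
      intro z; rw [inv_div]
    have hcont : Tendsto (fun z : ℂ => -(1 - z)^2) (nhdsWithin (ζ n) (StolzAngle (ζ n) 2))
        (nhds (-(1 - ζ n)^2)) := by
      have hco : Continuous (fun z : ℂ => -(1 - z)^2) := by continuity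
      exact (hco.tendsto _).mono_left nhdsWithin_le_nhds
    have hmul := hcont.mul hinv
    have hcongr : Tendsto (fun z => (z - ζ n) * g z) (nhdsWithin (ζ n) (StolzAngle (ζ n) 2))
        (nhds (-(1 - ζ n)^2 * (m n:ℂ)⁻¹)) := by
      apply Tendsto.congr' _ hmul
      filter_upwards [self_mem_nhdsWithin] with z hzS
      have hzD := stolz_subset_D _ _ hzS
      rw [hgf z hzD]
      ring
    have hrad := hcongr.comp (radial_tendsto (hζ n))
    have hfinal := hrad.const_mul (-(starRingEnd ℂ) (ζ n))
    have hcongr2 : Tendsto (fun r : ℝ => (1 - (r:ℂ)) * g ((r:ℂ) * ζ n))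
        (nhdsWithin 1 (Iio (1:ℝ)))
        (nhds (-(starRingEnd ℂ) (ζ n) * (-(1 - ζ n)^2 * (m n:ℂ)⁻¹))) := by
      apply Tendsto.congr _ hfinal
      intro r
      show -(starRingEnd ℂ) (ζ n) * (((r:ℂ) * ζ n - ζ n) * g ((r:ℂ) * ζ n))
          = (1 - (r:ℂ)) * g ((r:ℂ) * ζ n)
      have e : -(starRingEnd ℂ) (ζ n) * ((r:ℂ) * ζ n - ζ n) = 1 - (r:ℂ) := by
        linear_combination ((1:ℂ) - (r:ℂ)) * hζcc n
      rw [← mul_assoc, e]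
    have hval : -(starRingEnd ℂ) (ζ n) * (-(1 - ζ n)^2 * (m n:ℂ)⁻¹)
        = ((2 * (1 - (ζ n).re) * c n : ℝ) : ℂ) := by
      have e1 : (starRingEnd ℂ) (ζ n) * (1 - ζ n)^2 = ((2 * (ζ n).re - 2 : ℝ) : ℂ) := by
        have e0 : (starRingEnd ℂ) (ζ n) * (1 - ζ n)^2
            = (starRingEnd ℂ) (ζ n) - 2 * ((starRingEnd ℂ) (ζ n) * ζ n)
              + ((starRingEnd ℂ) (ζ n) * ζ n) * ζ n := by ring
        rw [e0, hζcc n]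
        have e2 : (ζ n) + (starRingEnd ℂ) (ζ n) = ((2 * (ζ n).re : ℝ) : ℂ) := by
          rw [Complex.add_conj]
        push_cast at e2 ⊢
        linear_combination e2
      have e3 : -(starRingEnd ℂ) (ζ n) * (-(1 - ζ n)^2 * (m n:ℂ)⁻¹)
          = ((starRingEnd ℂ) (ζ n) * (1 - ζ n)^2) * (m n:ℂ)⁻¹ := by ring
      rw [e3, e1, ← Complex.ofReal_inv, ← Complex.ofReal_mul]
      apply Complex.ofReal_inj.2
      rw [hcm n]; ring
    rw [hval] at hcongr2; exact hcongr2
  -- the inductive lower bound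
  have key : ∀ S : Finset (Fin N), ∀ z ∈ ball (0:ℂ) 1,
      0 ≤ (g z - ∑ n ∈ S, ((c n : ℝ):ℂ) * hh n z).re := by
    intro S
    induction S using Finset.induction_on with
    | empty =>
      intro z hz
      simpa using hgre z hz
    | @insert a S haS IH =>
      intro z hz
      have hQd : DifferentiableOn ℂ (fun z => g z - ∑ n ∈ S, ((c n:ℝ):ℂ) * hh n z)
          (ball (0:ℂ) 1) :=
        hgd.sub (DifferentiableOn.fun_sum (fun n _ => (differentiableOn_const _).mul (hhd n)))
      have hzero : ∀ j, j ≠ a →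
          Tendsto (fun r : ℝ => ((c j:ℝ):ℂ) * ((1 - (r:ℂ)) * hh j ((r:ℂ) * ζ a)))
            (nhdsWithin 1 (Iio (1:ℝ))) (nhds 0) := by
        intro j hja
        have hcontj : ContinuousAt (hh j) (ζ a) := by
          apply ContinuousAt.div
          · exact (((continuous_const.sub continuous_id).mul continuous_const)).continuousAt
          · exact (continuous_id.sub continuous_const).continuousAt
          · exact sub_ne_zero.2 (fun h => hja (hinj h).symm)
        have h1 : Tendsto (fun r : ℝ => hh j ((r:ℂ) * ζ a)) (nhdsWithin 1 (Iio (1:ℝ)))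
            (nhds (hh j (ζ a))) :=
          (hcontj.tendsto).comp ((radial_tendsto (hζ a)).mono_right nhdsWithin_le_nhds)
        have h2 : Tendsto (fun r : ℝ => (1 - (r:ℂ))) (nhdsWithin 1 (Iio (1:ℝ))) (nhds 0) := by
          have hco : Continuous (fun r : ℝ => 1 - (r:ℂ)) := by continuity
          have h3 := hco.tendsto 1
          norm_num at h3
          exact h3.mono_left nhdsWithin_le_nhds
        have h4 := (h2.mul h1).const_mul ((c j:ℝ):ℂ)
        simpa using h4
      have hlimS : Tendsto
          (fun r : ℝ => (1 - (r:ℂ)) * (g ((r:ℂ)*ζ a) - ∑ n ∈ S, ((c n:ℝ):ℂ) * hh n ((r:ℂ)*ζ a)))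
          (nhdsWithin 1 (Iio (1:ℝ))) (nhds ((2*(1-(ζ a).re)*c a : ℝ):ℂ)) := by
        have hsum : Tendsto
            (fun r : ℝ => ∑ n ∈ S, ((c n:ℝ):ℂ) * ((1 - (r:ℂ)) * hh n ((r:ℂ)*ζ a)))
            (nhdsWithin 1 (Iio (1:ℝ))) (nhds 0) := by
          have h5 := tendsto_finset_sum S (fun n hn => hzero n (fun h => haS (h ▸ hn)))
          simpa using h5
        have h6 := (hradg a).sub hsum
        rw [sub_zero] at h6
        apply Tendsto.congr _ h6
        intro r
        rw [mul_sub, Finset.mul_sum]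
        congr 1
        apply Finset.sum_congr rfl
        intro n _
        ring
      have hlp := lemP hQd IH (hζ a) hlimS hz
      rw [Complex.ofReal_re] at hlp
      have hid := hhre a z hz
      have hpos : 0 < normSq (z - ζ a) := normSq_pos.2 (hzζ a z hz)
      have hns_comm : normSq (ζ a - z) = normSq (z - ζ a) := by
        rw [← normSq_neg]; congr 1; ring
      rw [hns_comm] at hlp
      rw [Finset.sum_insert haS]
      have hre_ca : (((c a:ℝ):ℂ) * hh a z).re = c a * (hh a z).re := Complex.re_ofReal_mul _ _
      have hsplit : (g z - (((c a:ℝ):ℂ) * hh a z + ∑ n ∈ S, ((c n:ℝ):ℂ) * hh n z)).re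
          = (g z - ∑ n ∈ S, ((c n:ℝ):ℂ) * hh n z).re - c a * (hh a z).re := by
        rw [← hre_ca]
        simp only [Complex.sub_re, Complex.add_re]
        ring
      rw [hsplit]
      have hfromlp : c a * (hh a z).re * (2 * normSq (z - ζ a))
          ≤ (g z - ∑ n ∈ S, ((c n:ℝ):ℂ) * hh n z).re * (2 * normSq (z - ζ a)) := by
        calc c a * (hh a z).re * (2 * normSq (z - ζ a))
            = 2 * c a * ((hh a z).re * normSq (z - ζ a)) := by ring
          _ = 2 * c a * ((1 - (ζ a).re) * (1 - normSq z)) := by rw [hid]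
          _ = (2 * (1 - (ζ a).re) * c a) * (1 - normSq z) := by ring
          _ ≤ (g z - ∑ n ∈ S, ((c n:ℝ):ℂ) * hh n z).re * (2 * normSq (z - ζ a)) := hlp
      have h7 := le_of_mul_le_mul_right hfromlp (by positivity)
      linarith
  -- values at 0
  have hh0 : ∀ n, hh n 0 = 1 - (starRingEnd ℂ) (ζ n) := by
    intro n
    rw [hhn]
    have hζ0 : (0:ℂ) - ζ n ≠ 0 := hzζ n 0 h0D
    rw [div_eq_iff hζ0]
    linear_combination (-1 : ℂ) * hζcc n
  have hQ0re : (g 0 - ∑ n, ((c n:ℝ):ℂ) * hh n 0).re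
      = (g 0).re - ∑ n, c n * (1 - (ζ n).re) := by
    rw [Complex.sub_re]
    congr 1
    rw [Complex.re_sum]
    apply Finset.sum_congr rfl
    intro n _
    rw [hh0 n, Complex.re_ofReal_mul]
    congr 1
  have hf0c : f 0 = -(p 0) := by rw [hf 0]; ring
  have hf0 : (1:ℂ) / f 0 = -(g 0) := by
    rw [hf0c]
    show (1:ℂ) / -(p 0) = -((1:ℂ)/p 0)
    rw [div_neg]
  have hf0re : -(1 / f 0).re = (g 0).re := by
    rw [hf0]; simp
  have hsum2 : (∑ n, (1 - (ζ n).re) / |m n|) = ∑ n, c n * (1 - (ζ n).re) := by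
    apply Finset.sum_congr rfl
    intro n _
    rw [hcn n]
    ring
  -- radial data at 1
  have hIoo : Ioo (0:ℝ) 1 ∈ nhdsWithin (1:ℝ) (Iio (1:ℝ)) :=
    Ioo_mem_nhdsLT_of_mem (by constructor <;> norm_num)
  have hrD : ∀ r : ℝ, r ∈ Ioo (0:ℝ) 1 → ((r:ℂ)) ∈ ball (0:ℂ) 1 := by
    intro r hr
    rw [mem_ball_zero_iff]
    rw [show ‖(r:ℂ)‖ = |r| from Complex.norm_real r]
    rw [_root_.abs_of_nonneg hr.1.le]
    exact hr.2
  set T : ℝ → ℂ := fun r => (((1 - r)⁻¹ : ℝ) : ℂ) * (g (r:ℂ) - ∑ n, ((c n:ℝ):ℂ) * hh n (r:ℂ))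
    with hTdef
  have hTn : ∀ r : ℝ, T r
      = (((1 - r)⁻¹ : ℝ) : ℂ) * (g (r:ℂ) - ∑ n, ((c n:ℝ):ℂ) * hh n (r:ℂ)) := fun r => rfl
  have hg1 : Tendsto (fun r : ℝ => (((1 - r)⁻¹:ℝ):ℂ) * g (r:ℂ)) (nhdsWithin 1 (Iio (1:ℝ)))
      (nhds ((m₀:ℂ)⁻¹)) := by
    have hm₀ne : (m₀:ℂ) ≠ 0 := by exact_mod_cast hm₀.ne'
    have hinv : Tendsto (fun z : ℂ => (z - 1)/f z) (nhdsWithin 1 (StolzAngle 1 2))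
        (nhds ((m₀:ℂ)⁻¹)) := by
      have h := (hder1 2 one_lt_two).inv₀ hm₀ne
      apply h.congr
      intro z; rw [inv_div]
    have hrad := hinv.comp (radial_tendsto habs1)
    apply Tendsto.congr' _ hrad
    filter_upwards [hIoo] with r hr
    show ((fun z : ℂ => (z - 1)/f z) ∘ fun r : ℝ => (r:ℂ) * 1) r = _
    simp only [Function.comp_apply, mul_one]
    rw [hgf (r:ℂ) (hrD r hr)]
    have h1r : (1:ℂ) - (r:ℂ) ≠ 0 := sub_ne_zero.2 (by exact_mod_cast hr.2.ne')
    have hfr : f (r:ℂ) ≠ 0 := hfne _ (hrD r hr)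
    rw [show (((1 - r)⁻¹:ℝ):ℂ) = ((1:ℂ) - (r:ℂ))⁻¹ by push_cast; ring]
    field_simp
    ring
  have hgn : ∀ n, Tendsto (fun r : ℝ => (((1 - r)⁻¹:ℝ):ℂ) * (((c n:ℝ):ℂ) * hh n (r:ℂ)))
      (nhdsWithin 1 (Iio (1:ℝ))) (nhds ((c n:ℝ):ℂ)) := by
    intro n
    have hζn1 : (1:ℂ) - ζ n ≠ 0 := sub_ne_zero.2 (Ne.symm (hζ1 n))
    have hco : Tendsto (fun r : ℝ => ((c n:ℝ):ℂ) * ((1 - ζ n)/((r:ℂ) - ζ n)))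
        (nhdsWithin 1 (Iio (1:ℝ))) (nhds (((c n:ℝ):ℂ) * ((1 - ζ n)/(1 - ζ n)))) := by
      apply Tendsto.const_mul
      apply Tendsto.div tendsto_const_nhds _ hζn1
      have hcc : Continuous (fun r : ℝ => (r:ℂ) - ζ n) :=
        Complex.continuous_ofReal.sub continuous_const
      have h15 := hcc.tendsto 1
      norm_num at h15
      exact h15.mono_left nhdsWithin_le_nhds
    rw [div_self hζn1, mul_one] at hco
    apply Tendsto.congr' _ hco
    filter_upwards [hIoo] with r hr
    rw [hhn]
    have h1r : (1:ℂ) - (r:ℂ) ≠ 0 := sub_ne_zero.2 (by exact_mod_cast hr.2.ne')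
    have hrζ : (r:ℂ) - ζ n ≠ 0 := hzζ n _ (hrD r hr)
    rw [show (((1 - r)⁻¹:ℝ):ℂ) = ((1:ℂ) - (r:ℂ))⁻¹ by push_cast; ring]
    field_simp
  have hTlim : Tendsto T (nhdsWithin 1 (Iio (1:ℝ)))
      (nhds ((m₀:ℂ)⁻¹ - ∑ n, ((c n:ℝ):ℂ))) := by
    have h6 := hg1.sub (tendsto_finset_sum Finset.univ (fun n _ => hgn n))
    apply Tendsto.congr _ h6
    intro r
    simp only [hTn r, mul_sub, Finset.mul_sum]
  have hLs_re : ((m₀:ℂ)⁻¹ - ∑ n, ((c n:ℝ):ℂ)).re = 1/m₀ - ∑ n, c n := by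
    rw [Complex.sub_re]
    congr 1
    · rw [← Complex.ofReal_inv, Complex.ofReal_re, one_div]
    · rw [Complex.re_sum]
      apply Finset.sum_congr rfl
      intro n _
      exact Complex.ofReal_re _
  have hQd_univ : DifferentiableOn ℂ (fun z => g z - ∑ n, ((c n:ℝ):ℂ) * hh n z)
      (ball (0:ℂ) 1) :=
    hgd.sub (DifferentiableOn.fun_sum (fun n _ => (differentiableOn_const _).mul (hhd n)))
  have hQre_univ : ∀ z ∈ ball (0:ℂ) 1,
      0 ≤ ((fun z => g z - ∑ n, ((c n:ℝ):ℂ) * hh n z) z).re :=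
    fun z hz => key Finset.univ z hz
  haveI : (nhdsWithin (1:ℝ) (Iio (1:ℝ))).NeBot := nhdsLT_neBot 1
  -- inequality 1
  have hineq1 : (∑ n, c n) ≤ 1/m₀ := by
    have hTre : ∀ᶠ r in nhdsWithin (1:ℝ) (Iio (1:ℝ)), 0 ≤ (T r).re := by
      filter_upwards [hIoo] with r hr
      rw [hTn r, Complex.re_ofReal_mul]
      exact mul_nonneg (inv_nonneg.2 (by linarith [hr.2])) (key Finset.univ _ (hrD r hr))
    have hlimre := (Complex.continuous_re.tendsto _).comp hTlim
    have h8 := ge_of_tendsto hlimre hTre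
    rw [hLs_re] at h8
    linarith
  -- inequality 2
  have hkey0 := key Finset.univ 0 h0D
  rw [hQ0re] at hkey0
  have hineq2 : (∑ n, c n * (1 - (ζ n).re)) ≤ (g 0).re := by linarith
  -- equality machinery
  have hA : (g 0 - ∑ n, ((c n:ℝ):ℂ) * hh n 0).re = 0 →
      ∀ z ∈ ball (0:ℂ) 1, g z - ∑ n, ((c n:ℝ):ℂ) * hh n z = 0 := by
    intro h0re
    have hconst := const_of_re_zero hQd_univ hQre_univ h0D h0re
    by_cases hQ0z : (g 0 - ∑ n, ((c n:ℝ):ℂ) * hh n 0) = 0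
    · intro z hz
      exact (hconst z hz).trans hQ0z
    · exfalso
      have hnormc : 0 < ‖g 0 - ∑ n, ((c n:ℝ):ℂ) * hh n 0‖ := norm_pos_iff.2 hQ0z
      have h1r : Tendsto (fun r : ℝ => 1 - r) (nhdsWithin 1 (Iio (1:ℝ)))
          (nhdsWithin 0 (Ioi (0:ℝ))) := by
        rw [tendsto_nhdsWithin_iff]
        constructor
        · have hcc : Continuous (fun r : ℝ => 1 - r) := continuous_const.sub continuous_id
          have h16 := hcc.tendsto 1
          norm_num at h16
          exact h16.mono_left nhdsWithin_le_nhds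
        · filter_upwards [self_mem_nhdsWithin] with r hr
          simp only [Set.mem_Ioi]
          simp only [Set.mem_Iio] at hr
          linarith
      have hblow : Tendsto (fun r : ℝ => (1 - r)⁻¹) (nhdsWithin 1 (Iio (1:ℝ))) atTop :=
        tendsto_inv_nhdsGT_zero.comp h1r
      have hblow2 : Tendsto (fun r : ℝ => (1 - r)⁻¹ * ‖g 0 - ∑ n, ((c n:ℝ):ℂ) * hh n 0‖)
          (nhdsWithin 1 (Iio (1:ℝ))) atTop := hblow.atTop_mul_const hnormc
      have hnormT : Tendsto (fun r : ℝ => ‖T r‖) (nhdsWithin 1 (Iio (1:ℝ))) atTop := by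
        apply Tendsto.congr' _ hblow2
        filter_upwards [hIoo] with r hr
        have e5 : ‖T r‖ = (1 - r)⁻¹ * ‖g 0 - ∑ n, ((c n:ℝ):ℂ) * hh n 0‖ := by
          rw [hTn r]
          have h21 : (g (r:ℂ) - ∑ n, ((c n:ℝ):ℂ) * hh n (r:ℂ))
              = g 0 - ∑ n, ((c n:ℝ):ℂ) * hh n 0 := hconst (r:ℂ) (hrD r hr)
          rw [h21, norm_mul, Complex.norm_real]
          congr 1
          exact _root_.abs_of_nonneg (inv_nonneg.2 (by linarith [hr.2]))
        exact e5.symm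
      exact not_tendsto_atTop_of_tendsto_nhds (hTlim.norm) hnormT
  have hB : (∑ n, c n) = 1/m₀ → (g 0 - ∑ n, ((c n:ℝ):ℂ) * hh n 0).re = 0 := by
    intro heq
    have hLs0 : (m₀:ℂ)⁻¹ - ∑ n, ((c n:ℝ):ℂ) = 0 := by
      have h9 : ((m₀:ℂ)⁻¹ - ∑ n, ((c n:ℝ):ℂ)) = (((1/m₀ - ∑ n, c n : ℝ)):ℂ) := by
        push_cast
        rw [one_div]
      rw [h9, show (1/m₀ - ∑ n, c n : ℝ) = 0 by rw [← heq]; ring]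
      exact Complex.ofReal_zero
    have hT0 : Tendsto T (nhdsWithin 1 (Iio (1:ℝ))) (nhds 0) := by
      rw [← hLs0]; exact hTlim
    have hre0 : Tendsto (fun r => (T r).re) (nhdsWithin 1 (Iio (1:ℝ))) (nhds 0) := by
      have h17 := (Complex.continuous_re.tendsto _).comp hT0
      exact h17
    have hsq : ∀ r ∈ Ioo (0:ℝ) 1,
        (g 0 - ∑ n, ((c n:ℝ):ℂ) * hh n 0).re * (1 + r) ≤ 4 * (T r).re := by
      intro r hr
      have hH := harnack hQd_univ hQre_univ h0D (hrD r hr)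
      have e1 : (1 - normSq (0:ℂ)) = 1 := by simp
      have e2 : normSq (1 - (starRingEnd ℂ) ((r:ℂ)) * 0) = 1 := by simp
      rw [e1, e2, one_mul, mul_one] at hH
      have e3 : normSq ((r:ℂ)) = r^2 := by
        rw [Complex.normSq_ofReal]; ring
      rw [e3] at hH
      have h1rpos : (0:ℝ) < 1 - r := by linarith [hr.2]
      have e4 : (g (r:ℂ) - ∑ n, ((c n:ℝ):ℂ) * hh n (r:ℂ)).re = (1 - r) * (T r).re := by
        rw [hTn r, Complex.re_ofReal_mul, ← mul_assoc,
          mul_inv_cancel₀ (ne_of_gt h1rpos), one_mul]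
      rw [e4] at hH
      nlinarith [hH]
    have hlhs : Tendsto (fun r : ℝ => (g 0 - ∑ n, ((c n:ℝ):ℂ) * hh n 0).re * (1 + r))
        (nhdsWithin 1 (Iio (1:ℝ)))
        (nhds ((g 0 - ∑ n, ((c n:ℝ):ℂ) * hh n 0).re * 2)) := by
      have hcc : Continuous (fun r : ℝ => (g 0 - ∑ n, ((c n:ℝ):ℂ) * hh n 0).re * (1 + r)) :=
        continuous_const.mul (continuous_const.add continuous_id)
      have h18 := hcc.tendsto 1
      have e6 : (g 0 - ∑ n, ((c n:ℝ):ℂ) * hh n 0).re * (1 + 1)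
          = (g 0 - ∑ n, ((c n:ℝ):ℂ) * hh n 0).re * 2 := by ring
      rw [e6] at h18
      exact h18.mono_left nhdsWithin_le_nhds
    have hrhs : Tendsto (fun r : ℝ => 4 * (T r).re) (nhdsWithin 1 (Iio (1:ℝ))) (nhds 0) := by
      have h19 := hre0.const_mul (4:ℝ)
      simpa using h19
    have h10 := le_of_tendsto_of_tendsto hlhs hrhs
      (by filter_upwards [hIoo] with r hr using hsq r hr)
    have h11 := key Finset.univ 0 h0D
    linarith
  have hC : (∑ n, c n * (1 - (ζ n).re)) = (g 0).re →
      (g 0 - ∑ n, ((c n:ℝ):ℂ) * hh n 0).re = 0 := by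
    intro heq
    rw [hQ0re]
    linarith
  have hD : (∀ z ∈ ball (0:ℂ) 1, g z - ∑ n, ((c n:ℝ):ℂ) * hh n z = 0) →
      ∀ z ∈ ball (0:ℂ) 1,
        1 / f z = ∑ n, (1 / ((|m n| : ℝ) : ℂ)) * (1 / (z - 1) - 1 / (z - ζ n)) := by
    intro hP0 z hz
    have hgz : g z = ∑ n, ((c n:ℝ):ℂ) * hh n z := sub_eq_zero.1 (hP0 z hz)
    have h1f : 1 / f z = -(g z) / (1 - z)^2 := by
      rw [hf z]
      show (1:ℂ) / _ = -((1:ℂ)/p z) / (1 - z)^2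
      rw [div_eq_div_iff
        (mul_ne_zero (neg_ne_zero.2 (pow_ne_zero 2 (hone_sub z hz))) (hpne z hz))
        (pow_ne_zero 2 (hone_sub z hz))]
      field_simp [hpne z hz]
    rw [h1f, hgz, neg_div, Finset.sum_div, ← Finset.sum_neg_distrib]
    apply Finset.sum_congr rfl
    intro n _
    have hmn0 : ((|m n|:ℝ):ℂ) ≠ 0 := by
      simp only [ne_eq, Complex.ofReal_eq_zero]
      exact abs_ne_zero.2 (hm n).ne
    have hc_eq : ((c n:ℝ):ℂ) = 1 / ((|m n|:ℝ):ℂ) := by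
      rw [hcn n]; push_cast; ring
    rw [hhn, hc_eq]
    have hz1 : z - 1 ≠ 0 := sub_ne_zero.2 (h1D z hz)
    have hzn : z - ζ n ≠ 0 := hzζ n z hz
    have h1z : (1:ℂ) - z ≠ 0 := hone_sub z hz
    field_simp
    ring
  have hE : (∀ z ∈ ball (0:ℂ) 1,
        1 / f z = ∑ n, (1 / ((|m n| : ℝ) : ℂ)) * (1 / (z - 1) - 1 / (z - ζ n))) →
      ∀ z ∈ ball (0:ℂ) 1, g z - ∑ n, ((c n:ℝ):ℂ) * hh n z = 0 := by
    intro hEXT z hz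
    have h1f := hEXT z hz
    have hg2 : g z = -(1 - z)^2 * (1 / f z) := by
      rw [hgf z hz, div_eq_mul_one_div]
    rw [hg2, h1f, Finset.mul_sum, ← Finset.sum_sub_distrib]
    apply Finset.sum_eq_zero
    intro n _
    have hmn0 : ((|m n|:ℝ):ℂ) ≠ 0 := by
      simp only [ne_eq, Complex.ofReal_eq_zero]
      exact abs_ne_zero.2 (hm n).ne
    have hc_eq : ((c n:ℝ):ℂ) = 1 / ((|m n|:ℝ):ℂ) := by
      rw [hcn n]; push_cast; ring
    rw [hhn, hc_eq]
    have hz1 : z - 1 ≠ 0 := sub_ne_zero.2 (h1D z hz)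
    have hzn : z - ζ n ≠ 0 := hzζ n z hz
    field_simp
    ring
  have hF : (∀ z ∈ ball (0:ℂ) 1, g z - ∑ n, ((c n:ℝ):ℂ) * hh n z = 0) →
      (∑ n, c n) = 1/m₀ := by
    intro hP0
    have hT0 : Tendsto T (nhdsWithin 1 (Iio (1:ℝ))) (nhds 0) := by
      apply Tendsto.congr' _ tendsto_const_nhds
      filter_upwards [hIoo] with r hr
      exact (by rw [hTn r, hP0 (r:ℂ) (hrD r hr), mul_zero] : T r = 0).symm
    have h12 := tendsto_nhds_unique hTlim hT0
    have h13 := congrArg Complex.re h12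
    rw [hLs_re] at h13
    simp only [Complex.zero_re] at h13
    linarith
  have hG : (∀ z ∈ ball (0:ℂ) 1, g z - ∑ n, ((c n:ℝ):ℂ) * hh n z = 0) →
      (∑ n, c n * (1 - (ζ n).re)) = (g 0).re := by
    intro hP0
    have h0 := hP0 0 h0D
    have h14 := congrArg Complex.re h0
    rw [hQ0re] at h14
    simp only [Complex.zero_re] at h14
    linarith
  -- final assembly
  refine ⟨hineq1, ?_, ⟨⟨fun h => hD (hA (hB h)), fun hEXT => hF (hE hEXT)⟩,
    ⟨fun h => hD (hA (hC ?_)), fun hEXT => ?_⟩⟩⟩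
  · rw [hsum2]
    linarith [hineq2, hf0re]
  · rw [hsum2] at h
    linarith [hf0re]
  · have := hG (hE hEXT)
    rw [hsum2]
    linarith [hf0re]
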